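/- Let g ∈ L²(ℝᵈ), b ∈ GL_d(ℝ), E(g,b) = {ω : g_b(ω) > 0}, and let u_g(ω) = g(ω)/g_b(b⁻¹ω) on b·E(g,b), zero elsewhere. Then ‖g - u_g‖_{L²(ℝᵈ)} = ‖g_b - χ_{E(g,b) ∩ [0,1]ᵈ}‖_{L²([0,1]ᵈ)}. -/

import Mathlib

open MeasureTheory Filter Submodule
open scoped Classical
noncomputable section

/-- The Grammian of `g` with respect to the matrix `b`. -/
def gram2 {d : ℕ} (b : Matrix (Fin d) (Fin d) ℝ) (g : (Fin d → ℝ) → ℂ) (ω : Fin d → ℝ) : ℝ :=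
  Real.sqrt (|b.det| * ∑' s : Fin d → ℤ, ‖g (b.mulVec (ω + fun i => (s i : ℝ)))‖ ^ 2)

/-- `E(g,b) = {ω : g_b(ω) > 0}`. -/
def Egb {d : ℕ} (b : Matrix (Fin d) (Fin d) ℝ) (g : (Fin d → ℝ) → ℂ) : Set (Fin d → ℝ) :=
  {ω | 0 < gram2 b g ω}

/-- `u_g(ω) = g(ω)/g_b(b⁻¹ω)` for `ω ∈ b·E(g,b)`, and `0` otherwise. -/
def ug {d : ℕ} (b : Matrix (Fin d) (Fin d) ℝ) (g : (Fin d → ℝ) → ℂ) (ω : Fin d → ℝ) : ℂ :=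
  if ω ∈ b.mulVec '' Egb b g then g ω / (gram2 b g (b⁻¹.mulVec ω) : ℝ) else 0

abbrev stdLattice (d : ℕ) : Submodule ℤ (Fin d → ℝ) :=
  span ℤ (Set.range (Pi.basisFun ℝ (Fin d)))

def latticeEquiv (d : ℕ) : (Fin d → ℤ) ≃ stdLattice d :=
  (((Pi.basisFun ℝ (Fin d)).restrictScalars ℤ).equivFun).symm.toEquiv

lemma latticeEquiv_coe (s : Fin d → ℤ) :
    ((latticeEquiv d s : stdLattice d) : Fin d → ℝ) = fun i => (s i : ℝ) := by
  funext j
  simp only [latticeEquiv, LinearEquiv.coe_toEquiv, Module.Basis.equivFun_symm_apply]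
  push_cast
  simp [Pi.basisFun_apply, Finset.sum_apply, Pi.single_apply]

abbrev Fd (d : ℕ) : Set (Fin d → ℝ) := ZSpan.fundamentalDomain (Pi.basisFun ℝ (Fin d))

instance : Countable (stdLattice d) := Countable.of_equiv _ (latticeEquiv d)

instance instCount2 : Countable (stdLattice d).toAddSubgroup :=
  Countable.of_equiv _ (latticeEquiv d)

def latticeEquiv' (d : ℕ) : (Fin d → ℤ) ≃ (stdLattice d).toAddSubgroup := latticeEquiv d

lemma quasiMP (b : Matrix (Fin d) (Fin d) ℝ) (hb : b.det ≠ 0) (s : Fin d → ℤ) :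
    Measure.QuasiMeasurePreserving
      (fun x : Fin d → ℝ => b.mulVec ((fun i => (s i : ℝ)) + x)) volume volume := by
  have hmeas : Measurable fun x : Fin d → ℝ => b.mulVec ((fun i => (s i : ℝ)) + x) := by
    have : Continuous fun x : Fin d → ℝ => b.mulVec ((fun i => (s i : ℝ)) + x) := by
      exact (Matrix.toLin' b).continuous_of_finiteDimensional.comp
        (continuous_const.add continuous_id)
    exact this.measurable
  refine ⟨hmeas, ?_⟩
  have h1 : (fun x : Fin d → ℝ => b.mulVec ((fun i => (s i : ℝ)) + x)) =
      (Matrix.toLin' b) ∘ (fun x => (fun i => (s i : ℝ)) + x) := by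
    funext x; simp [Matrix.toLin'_apply]
  have hA : Measurable (⇑(Matrix.toLin' b)) :=
    ((Matrix.toLin' b).continuous_of_finiteDimensional).measurable
  have hB : Measurable fun x : Fin d → ℝ => (fun i => (s i : ℝ)) + x :=
    measurable_id.const_add _
  rw [h1, ← Measure.map_map hA hB]
  rw [(measurePreserving_add_left volume _).map_eq,
    Real.map_matrix_volume_pi_eq_smul_volume_pi hb]
  exact Measure.smul_absolutelyContinuous

lemma vadd_eq (s : Fin d → ℤ) (x : Fin d → ℝ) :
    ((latticeEquiv' d s) +ᵥ x : Fin d → ℝ) = x + fun i => (s i : ℝ) := by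
  show ((latticeEquiv' d s : Fin d → ℝ)) + x = _
  rw [show ((latticeEquiv' d s : Fin d → ℝ)) = ((latticeEquiv d s : stdLattice d) : Fin d → ℝ) from rfl,
    latticeEquiv_coe, add_comm]

lemma lintegral_decomp (b : Matrix (Fin d) (Fin d) ℝ) (hb : b.det ≠ 0)
    (f : (Fin d → ℝ) → ENNReal) (hf : AEMeasurable f volume) :
    ∫⁻ x, f x ∂volume =
      ∫⁻ ω in Fd d, ∑' s : Fin d → ℤ,
        ENNReal.ofReal |b.det| * f (b.mulVec (ω + fun i => (s i : ℝ))) ∂volume := by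
  have hDt : ENNReal.ofReal |b.det| ≠ ⊤ := ENNReal.ofReal_ne_top
  have hmap : Measure.map (Matrix.toLin' b) volume = ENNReal.ofReal |(b.det)⁻¹| • volume :=
    Real.map_matrix_volume_pi_eq_smul_volume_pi hb
  have key : ENNReal.ofReal |b.det| * ENNReal.ofReal |(b.det)⁻¹| = 1 := by
    rw [← ENNReal.ofReal_mul (abs_nonneg _), ← abs_mul, mul_inv_cancel₀ hb]; simp
  have step1 : ∫⁻ x, f x ∂volume
      = ENNReal.ofReal |b.det| * ∫⁻ x, f (b.mulVec x) ∂volume := by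
    have h2 : AEMeasurable f (Measure.map (Matrix.toLin' b) volume) := by
      rw [hmap]; exact hf.smul_measure _
    have h3 := lintegral_map' h2
      ((Matrix.toLin' b).continuous_of_finiteDimensional).measurable.aemeasurable
    rw [hmap, lintegral_smul_measure] at h3
    simp_rw [Matrix.toLin'_apply] at h3
    calc ∫⁻ x, f x ∂volume
        = (ENNReal.ofReal |b.det| * ENNReal.ofReal |(b.det)⁻¹|) * ∫⁻ x, f x ∂volume := by
          rw [key, one_mul]
      _ = ENNReal.ofReal |b.det| * (ENNReal.ofReal |(b.det)⁻¹| * ∫⁻ x, f x ∂volume) :=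
          mul_assoc _ _ _
      _ = ENNReal.ofReal |b.det| * ∫⁻ x, f (b.mulVec x) ∂volume := by rw [← h3, smul_eq_mul]
  have step2 : ∫⁻ x, f (b.mulVec x) ∂volume
      = ∑' s : Fin d → ℤ, ∫⁻ x in Fd d, f (b.mulVec (x + fun i => (s i : ℝ))) ∂volume := by
    rw [(ZSpan.isAddFundamentalDomain' (Pi.basisFun ℝ (Fin d)) volume).lintegral_eq_tsum''
      (fun x => f (b.mulVec x))]
    rw [← (latticeEquiv' d).tsum_eq]
    exact tsum_congr fun s => by simp_rw [vadd_eq]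
  have hswap : ∀ s : Fin d → ℤ,
      AEMeasurable (fun x : Fin d → ℝ => f (b.mulVec ((fun i => (s i : ℝ)) + x)))
        (volume.restrict (Fd d)) :=
    fun s => (hf.comp_quasiMeasurePreserving (quasiMP b hb s)).restrict
  have step3 : ∑' s : Fin d → ℤ, ∫⁻ x in Fd d, f (b.mulVec (x + fun i => (s i : ℝ))) ∂volume
      = ∫⁻ x in Fd d, ∑' s : Fin d → ℤ, f (b.mulVec (x + fun i => (s i : ℝ))) ∂volume := by
    calc ∑' s : Fin d → ℤ, ∫⁻ x in Fd d, f (b.mulVec (x + fun i => (s i : ℝ))) ∂volume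
        = ∑' s : Fin d → ℤ, ∫⁻ x in Fd d, f (b.mulVec ((fun i => (s i : ℝ)) + x)) ∂volume :=
          tsum_congr fun s => lintegral_congr fun x => by rw [add_comm]
      _ = ∫⁻ x in Fd d, ∑' s : Fin d → ℤ, f (b.mulVec ((fun i => (s i : ℝ)) + x)) ∂volume :=
          (lintegral_tsum hswap).symm
      _ = ∫⁻ x in Fd d, ∑' s : Fin d → ℤ, f (b.mulVec (x + fun i => (s i : ℝ))) ∂volume :=
          lintegral_congr fun x => tsum_congr fun s => by rw [add_comm]
  rw [step1, step2, step3, ← lintegral_const_mul' _ _ hDt]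
  exact lintegral_congr fun x => ENNReal.tsum_mul_left.symm

lemma tsum_nonneg_toReal {ι : Type*} (f : ι → ℝ) (hf : ∀ i, 0 ≤ f i) :
    ∑' i, f i = (∑' i, ENNReal.ofReal (f i)).toReal := by
  by_cases h : Summable f
  · rw [← ENNReal.ofReal_tsum_of_nonneg hf h, ENNReal.toReal_ofReal (tsum_nonneg hf)]
  · rw [tsum_eq_zero_of_not_summable h]
    have htop : ∑' i, ENNReal.ofReal (f i) = ⊤ := by
      by_contra hne
      have := ENNReal.summable_toReal hne
      simp_rw [ENNReal.toReal_ofReal (hf _)] at this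
      exact h this
    rw [htop]; rfl

/-- `Te b g ω` : the ENNReal-valued periodization sum. -/
def Te {d : ℕ} (b : Matrix (Fin d) (Fin d) ℝ) (g : (Fin d → ℝ) → ℂ) (ω : Fin d → ℝ) : ENNReal :=
  ∑' s : Fin d → ℤ, ENNReal.ofReal (‖g (b.mulVec (ω + fun i => (s i : ℝ)))‖ ^ 2)

lemma gram2_eq {d : ℕ} (b : Matrix (Fin d) (Fin d) ℝ) (g : (Fin d → ℝ) → ℂ) (ω : Fin d → ℝ) :
    gram2 b g ω = Real.sqrt (|b.det| * (Te b g ω).toReal) := by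
  unfold gram2 Te
  rw [tsum_nonneg_toReal _ (fun s => sq_nonneg _)]

lemma index_shift {d : ℕ} (ω : Fin d → ℝ) (s t : Fin d → ℤ) :
    (ω + fun i => (s i : ℝ)) + (fun i => (t i : ℝ)) = ω + fun i => ((s + t) i : ℝ) := by
  funext i
  simp only [Pi.add_apply]
  push_cast
  ring

lemma Te_add_int {d : ℕ} (b : Matrix (Fin d) (Fin d) ℝ) (g : (Fin d → ℝ) → ℂ)
    (ω : Fin d → ℝ) (s : Fin d → ℤ) :
    Te b g (ω + fun i => (s i : ℝ)) = Te b g ω := by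
  unfold Te
  have h : ∀ t : Fin d → ℤ,
      ENNReal.ofReal (‖g (b.mulVec ((ω + fun i => (s i : ℝ)) + fun i => (t i : ℝ)))‖ ^ 2)
        = ENNReal.ofReal (‖g (b.mulVec (ω + fun i => ((s + t) i : ℝ)))‖ ^ 2) := by
    intro t; rw [index_shift]
  calc ∑' t : Fin d → ℤ,
        ENNReal.ofReal (‖g (b.mulVec ((ω + fun i => (s i : ℝ)) + fun i => (t i : ℝ)))‖ ^ 2)
      = ∑' t : Fin d → ℤ, ENNReal.ofReal (‖g (b.mulVec (ω + fun i => ((s + t) i : ℝ)))‖ ^ 2) :=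
        tsum_congr h
    _ = ∑' t : Fin d → ℤ, ENNReal.ofReal (‖g (b.mulVec (ω + fun i => (t i : ℝ)))‖ ^ 2) :=
        (Equiv.addLeft s).tsum_eq fun u : Fin d → ℤ =>
          ENNReal.ofReal (‖g (b.mulVec (ω + fun i => (u i : ℝ)))‖ ^ 2)

lemma gram2_add_int {d : ℕ} (b : Matrix (Fin d) (Fin d) ℝ) (g : (Fin d → ℝ) → ℂ)
    (ω : Fin d → ℝ) (s : Fin d → ℤ) :
    gram2 b g (ω + fun i => (s i : ℝ)) = gram2 b g ω := by
  rw [gram2_eq, gram2_eq, Te_add_int]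

section meas
variable {d : ℕ} {b : Matrix (Fin d) (Fin d) ℝ} {g : (Fin d → ℝ) → ℂ}

lemma aemeasurable_term (hb : b.det ≠ 0) (hg : AEMeasurable g volume) (s : Fin d → ℤ) :
    AEMeasurable (fun ω : Fin d → ℝ =>
      ENNReal.ofReal (‖g (b.mulVec (ω + fun i => (s i : ℝ)))‖ ^ 2)) volume := by
  have he : (fun ω : Fin d → ℝ => b.mulVec (ω + fun i => (s i : ℝ)))
      = fun ω => b.mulVec ((fun i => (s i : ℝ)) + ω) := by
    funext ω; rw [add_comm]
  have h1 : AEMeasurable (fun x : Fin d → ℝ => g (b.mulVec ((fun i => (s i : ℝ)) + x)))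
      volume := hg.comp_quasiMeasurePreserving (quasiMP b hb s)
  have h2 : AEMeasurable (fun x : Fin d → ℝ =>
      ENNReal.ofReal (‖g (b.mulVec ((fun i => (s i : ℝ)) + x))‖ ^ 2)) volume :=
    ENNReal.measurable_ofReal.comp_aemeasurable ((h1.norm).pow_const 2)
  exact h2.congr (Filter.Eventually.of_forall fun ω => by simp [add_comm])

lemma aemeasurable_Te (hb : b.det ≠ 0) (hg : AEMeasurable g volume) :
    AEMeasurable (Te b g) volume :=
  AEMeasurable.ennreal_tsum fun s => aemeasurable_term hb hg s

lemma aemeasurable_gram2 (hb : b.det ≠ 0) (hg : AEMeasurable g volume) :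
    AEMeasurable (gram2 b g) volume := by
  have : AEMeasurable (fun ω => Real.sqrt (|b.det| * (Te b g ω).toReal)) volume :=
    Real.continuous_sqrt.measurable.comp_aemeasurable
      ((ENNReal.measurable_toReal.comp_aemeasurable (aemeasurable_Te hb hg)).const_mul _)
  exact this.congr (Filter.Eventually.of_forall fun ω => (gram2_eq b g ω).symm)

lemma nullmeasurable_Egb (hb : b.det ≠ 0) (hg : AEMeasurable g volume) :
    NullMeasurableSet (Egb b g) volume :=
  (aemeasurable_gram2 hb hg).nullMeasurable measurableSet_Ioi

lemma quasiMP0 (c : Matrix (Fin d) (Fin d) ℝ) (hc : c.det ≠ 0) :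
    Measure.QuasiMeasurePreserving (c.mulVec) volume volume := by
  have h := quasiMP c hc 0
  have heq : (fun x : Fin d → ℝ => c.mulVec ((fun i => (((0 : Fin d → ℤ)) i : ℝ)) + x))
      = fun x => c.mulVec x := by
    funext x
    have hx : ((fun i => (((0 : Fin d → ℤ)) i : ℝ)) + x) = x := by
      funext i; simp
    rw [hx]
  rwa [heq] at h

end meas

section main
variable {d : ℕ} {b : Matrix (Fin d) (Fin d) ℝ} {g : (Fin d → ℝ) → ℂ}

lemma hinv1 (hb : IsUnit b) (x : Fin d → ℝ) : b⁻¹.mulVec (b.mulVec x) = x := by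
  rw [Matrix.mulVec_mulVec, Matrix.nonsing_inv_mul b ((Matrix.isUnit_iff_isUnit_det b).mp hb),
    Matrix.one_mulVec]

lemma hinv2 (hb : IsUnit b) (x : Fin d → ℝ) : b.mulVec (b⁻¹.mulVec x) = x := by
  rw [Matrix.mulVec_mulVec, Matrix.mul_nonsing_inv b ((Matrix.isUnit_iff_isUnit_det b).mp hb),
    Matrix.one_mulVec]

lemma image_eq_preimage (hb : IsUnit b) :
    b.mulVec '' (Egb b g) = b⁻¹.mulVec ⁻¹' (Egb b g) := by
  ext x
  constructor
  · rintro ⟨y, hy, rfl⟩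
    simpa [Set.mem_preimage, hinv1 hb y] using hy
  · intro h
    exact ⟨b⁻¹.mulVec x, h, hinv2 hb x⟩

lemma det_inv_ne_zero (hb : IsUnit b) : (b⁻¹).det ≠ 0 := by
  have hdet : IsUnit b.det := (Matrix.isUnit_iff_isUnit_det b).mp hb
  rw [Matrix.det_nonsing_inv, Ring.inverse_eq_inv]
  exact inv_ne_zero hdet.ne_zero

lemma aemeasurable_ug (hb : IsUnit b) (hg : AEMeasurable g volume) :
    AEMeasurable (ug b g) volume := by
  classical
  have hdet : IsUnit b.det := (Matrix.isUnit_iff_isUnit_det b).mp hb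
  have hbd : b.det ≠ 0 := hdet.ne_zero
  have h1 : AEMeasurable (fun ω => g ω / ((gram2 b g (b⁻¹.mulVec ω) : ℝ) : ℂ)) volume :=
    hg.div (Complex.measurable_ofReal.comp_aemeasurable
      ((aemeasurable_gram2 hbd hg).comp_quasiMeasurePreserving (quasiMP0 b⁻¹ (det_inv_ne_zero hb))))
  have hset : NullMeasurableSet (b.mulVec '' Egb b g) volume := by
    rw [image_eq_preimage hb]
    exact (nullmeasurable_Egb hbd hg).preimage (quasiMP0 b⁻¹ (det_inv_ne_zero hb))
  have heq : ug b g = Set.indicator (b.mulVec '' Egb b g)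
      (fun ω => g ω / ((gram2 b g (b⁻¹.mulVec ω) : ℝ) : ℂ)) := by
    funext ω
    by_cases h : ω ∈ b.mulVec '' Egb b g <;> simp [ug, h]
  rw [heq]
  exact h1.indicator₀ hset

lemma pointwise_key (hb : IsUnit b) (ω : Fin d → ℝ) (hω : ω ∈ Fd d) (hTe : Te b g ω ≠ ⊤) :
    (∑' s : Fin d → ℤ, ENNReal.ofReal |b.det| * ENNReal.ofReal
        (‖g (b.mulVec (ω + fun i => (s i : ℝ)))
          - ug b g (b.mulVec (ω + fun i => (s i : ℝ)))‖ ^ 2))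
      = ENNReal.ofReal ((gram2 b g ω
          - Set.indicator (Egb b g ∩ Set.Icc (0 : Fin d → ℝ) 1) (fun _ => (1 : ℝ)) ω) ^ 2) := by
  classical
  have hdet : IsUnit b.det := (Matrix.isUnit_iff_isUnit_det b).mp hb
  have hbd : b.det ≠ 0 := hdet.ne_zero
  have habs : 0 < |b.det| := abs_pos.2 hbd
  set T : ℝ := (Te b g ω).toReal with hT
  have hTnn : 0 ≤ T := ENNReal.toReal_nonneg
  set G : ℝ := gram2 b g ω with hGdef
  have hGeq : G = Real.sqrt (|b.det| * T) := gram2_eq b g ω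
  have hGnn : 0 ≤ G := hGeq ▸ Real.sqrt_nonneg _
  have hG2 : G ^ 2 = |b.det| * T := by
    rw [hGeq]; exact Real.sq_sqrt (mul_nonneg habs.le hTnn)
  have hTe_eq : Te b g ω = ENNReal.ofReal T := (ENNReal.ofReal_toReal hTe).symm
  have hmem : ∀ s : Fin d → ℤ,
      (b.mulVec (ω + fun i => (s i : ℝ)) ∈ b.mulVec '' Egb b g) ↔ 0 < G := by
    intro s
    constructor
    · rintro ⟨y, hy, hxy⟩
      have hyy : y = ω + fun i => (s i : ℝ) := by
        have := congrArg b⁻¹.mulVec hxy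
        rwa [hinv1 hb, hinv1 hb] at this
      rw [hyy] at hy
      have : 0 < gram2 b g (ω + fun i => (s i : ℝ)) := hy
      rwa [gram2_add_int] at this
    · intro h
      refine ⟨ω + fun i => (s i : ℝ), ?_, rfl⟩
      show 0 < gram2 b g (ω + fun i => (s i : ℝ))
      rwa [gram2_add_int]
  have hgram : ∀ s : Fin d → ℤ,
      gram2 b g (b⁻¹.mulVec (b.mulVec (ω + fun i => (s i : ℝ)))) = G := by
    intro s; rw [hinv1 hb, gram2_add_int]
  by_cases hpos : 0 < G
  · -- positive case
    have hA : ∀ s : Fin d → ℤ, ug b g (b.mulVec (ω + fun i => (s i : ℝ)))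
        = g (b.mulVec (ω + fun i => (s i : ℝ))) / (G : ℂ) := by
      intro s
      unfold ug
      rw [if_pos ((hmem s).2 hpos), hgram s]
    have hterm : ∀ s : Fin d → ℤ,
        ENNReal.ofReal (‖g (b.mulVec (ω + fun i => (s i : ℝ)))
            - ug b g (b.mulVec (ω + fun i => (s i : ℝ)))‖ ^ 2)
          = ENNReal.ofReal (‖g (b.mulVec (ω + fun i => (s i : ℝ)))‖ ^ 2)
            * ENNReal.ofReal ((1 - G⁻¹) ^ 2) := by
      intro s
      rw [hA s]
      have h1 : g (b.mulVec (ω + fun i => (s i : ℝ))) -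
          g (b.mulVec (ω + fun i => (s i : ℝ))) / (G : ℂ)
            = g (b.mulVec (ω + fun i => (s i : ℝ))) * ((1 : ℂ) - ((G : ℂ))⁻¹) := by
        ring
      rw [h1, norm_mul, mul_pow, ENNReal.ofReal_mul (by positivity)]
      congr 2
      have h2 : ((1 : ℂ) - ((G : ℂ))⁻¹) = (((1 - G⁻¹ : ℝ)) : ℂ) := by push_cast; ring
      rw [h2, Complex.norm_real, Real.norm_eq_abs, sq_abs]
    have hind : Set.indicator (Egb b g ∩ Set.Icc (0 : Fin d → ℝ) 1) (fun _ => (1 : ℝ)) ω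
        = 1 := by
      have hIcc : ω ∈ Set.Icc (0 : Fin d → ℝ) 1 := by
        rw [← Set.pi_univ_Icc]
        intro i _
        have h3 := ((ZSpan.mem_fundamentalDomain (Pi.basisFun ℝ (Fin d))).mp hω) i
        rw [Pi.basisFun_repr] at h3
        exact Set.mem_Icc.mpr ⟨h3.1, h3.2.le⟩
      have hEgb : ω ∈ Egb b g := by
        show 0 < gram2 b g ω
        rw [← hGdef]
        exact hpos
      exact Set.indicator_of_mem (Set.mem_inter hEgb hIcc) _
    calc (∑' s : Fin d → ℤ, ENNReal.ofReal |b.det| * ENNReal.ofReal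
            (‖g (b.mulVec (ω + fun i => (s i : ℝ)))
              - ug b g (b.mulVec (ω + fun i => (s i : ℝ)))‖ ^ 2))
        = ∑' s : Fin d → ℤ, (ENNReal.ofReal |b.det|
            * ENNReal.ofReal (‖g (b.mulVec (ω + fun i => (s i : ℝ)))‖ ^ 2))
            * ENNReal.ofReal ((1 - G⁻¹) ^ 2) :=
          tsum_congr fun s => by rw [hterm s, mul_assoc]
      _ = (∑' s : Fin d → ℤ, ENNReal.ofReal |b.det|
            * ENNReal.ofReal (‖g (b.mulVec (ω + fun i => (s i : ℝ)))‖ ^ 2))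
            * ENNReal.ofReal ((1 - G⁻¹) ^ 2) := ENNReal.tsum_mul_right
      _ = (ENNReal.ofReal |b.det| * Te b g ω) * ENNReal.ofReal ((1 - G⁻¹) ^ 2) := by
          rw [ENNReal.tsum_mul_left]; rfl
      _ = ENNReal.ofReal (G ^ 2) * ENNReal.ofReal ((1 - G⁻¹) ^ 2) := by
          rw [hTe_eq, ← ENNReal.ofReal_mul habs.le, ← hG2]
      _ = ENNReal.ofReal (G ^ 2 * (1 - G⁻¹) ^ 2) :=
          (ENNReal.ofReal_mul (sq_nonneg _)).symm
      _ = ENNReal.ofReal ((G - 1) ^ 2) := by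
          congr 1
          have hne : G ≠ 0 := ne_of_gt hpos
          field_simp
      _ = ENNReal.ofReal ((gram2 b g ω
            - Set.indicator (Egb b g ∩ Set.Icc (0 : Fin d → ℝ) 1) (fun _ => (1 : ℝ)) ω) ^ 2) := by
          rw [hind]
  · -- zero case
    have hG0 : G = 0 := le_antisymm (not_lt.1 hpos) hGnn
    have hle : |b.det| * T ≤ 0 := by
      have h0 : Real.sqrt (|b.det| * T) = 0 := by rw [← hGeq, hG0]
      exact Real.sqrt_eq_zero'.mp h0
    have hT0 : T = 0 := by nlinarith
    have hTe0 : Te b g ω = 0 := by rw [hTe_eq, hT0, ENNReal.ofReal_zero]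
    have hzero : ∀ s : Fin d → ℤ, g (b.mulVec (ω + fun i => (s i : ℝ))) = 0 := by
      intro s
      have h1 : ENNReal.ofReal (‖g (b.mulVec (ω + fun i => (s i : ℝ)))‖ ^ 2) = 0 := by
        unfold Te at hTe0
        exact ENNReal.tsum_eq_zero.mp hTe0 s
      rw [ENNReal.ofReal_eq_zero] at h1
      have h2 : ‖g (b.mulVec (ω + fun i => (s i : ℝ)))‖ ^ 2 = 0 :=
        le_antisymm h1 (sq_nonneg _)
      have h3 : ‖g (b.mulVec (ω + fun i => (s i : ℝ)))‖ = 0 := by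
        nlinarith [norm_nonneg (g (b.mulVec (ω + fun i => (s i : ℝ))))]
      exact norm_eq_zero.mp h3
    have hug : ∀ s : Fin d → ℤ, ug b g (b.mulVec (ω + fun i => (s i : ℝ))) = 0 := by
      intro s
      unfold ug
      rw [if_neg (fun h => hpos ((hmem s).1 h))]
    have hind : Set.indicator (Egb b g ∩ Set.Icc (0 : Fin d → ℝ) 1) (fun _ => (1 : ℝ)) ω
        = 0 := by
      refine Set.indicator_of_notMem (fun hc => ?_) _
      exact hpos hc.1
    rw [hind, hG0]
    simp [hzero, hug]
end main

lemma eLpNorm_two {α : Type*} [MeasurableSpace α] {E : Type*} [NormedAddCommGroup E]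
    (μ : Measure α) (f : α → E) :
    eLpNorm f 2 μ = (∫⁻ x, ENNReal.ofReal (‖f x‖ ^ 2) ∂μ) ^ (1/2 : ℝ) := by
  rw [eLpNorm_eq_lintegral_rpow_enorm_toReal (by norm_num) (by norm_num)]
  have ht : (2 : ENNReal).toReal = 2 := by norm_num
  rw [ht]
  congr 1
  refine lintegral_congr fun x => ?_
  rw [← ofReal_norm,
    ENNReal.ofReal_rpow_of_nonneg (norm_nonneg _) (by norm_num)]
  congr 1
  rw [show (2:ℝ) = ((2:ℕ):ℝ) by norm_num, Real.rpow_natCast]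

lemma restrict_Icc_eq_Fd {d : ℕ} :
    (volume : Measure (Fin d → ℝ)).restrict (Set.Icc 0 1) = volume.restrict (Fd d) := by
  apply Measure.restrict_congr_set
  have hFd : Fd d = Set.pi Set.univ fun _ : Fin d => Set.Ico (0:ℝ) 1 :=
    ZSpan.fundamentalDomain_pi_basisFun
  have hsub : Fd d ⊆ Set.Icc (0 : Fin d → ℝ) 1 := by
    rw [hFd, ← Set.pi_univ_Icc]
    exact Set.pi_mono fun i _ => Set.Ico_subset_Icc_self
  have hmeas : MeasurableSet (Fd d) := ZSpan.fundamentalDomain_measurableSet _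
  have hIccV : volume (Set.Icc (0 : Fin d → ℝ) 1) = 1 := by
    rw [← Set.pi_univ_Icc, volume_pi_pi]
    simp [Real.volume_Icc]
  have hFdV : volume (Fd d) = 1 := by
    rw [hFd, volume_pi_pi]
    simp [Real.volume_Ico]
  have h1 : volume (Set.Icc (0 : Fin d → ℝ) 1 \ Fd d) = 0 := by
    rw [measure_diff hsub hmeas.nullMeasurableSet (by rw [hFdV]; exact ENNReal.one_ne_top),
      hIccV, hFdV, tsub_self]
  have h2 : volume (Fd d \ Set.Icc (0 : Fin d → ℝ) 1) = 0 := by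
    rw [Set.diff_eq_empty.mpr hsub, measure_empty]
  exact MeasureTheory.ae_eq_set.mpr ⟨h1, h2⟩



/-- `‖g - u_g‖_{L²(ℝᵈ)} = ‖g_b - χ_{E(g,b) ∩ [0,1]ᵈ}‖_{L²([0,1]ᵈ)}`. -/
theorem dist_ug_eq {d : ℕ} (g : (Fin d → ℝ) → ℂ)
    (hg : MemLp g 2 (volume : Measure (Fin d → ℝ)))
    (b : Matrix (Fin d) (Fin d) ℝ) (hb : IsUnit b) :
    eLpNorm (fun x => g x - ug b g x) 2 (volume : Measure (Fin d → ℝ)) =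
      eLpNorm
        (fun ω => gram2 b g ω -
          Set.indicator (Egb b g ∩ Set.Icc (0 : Fin d → ℝ) 1) (fun _ => (1 : ℝ)) ω) 2
        (volume.restrict (Set.Icc (0 : Fin d → ℝ) 1)) := by
  classical
  have hdet : IsUnit b.det := (Matrix.isUnit_iff_isUnit_det b).mp hb
  have hbd : b.det ≠ 0 := hdet.ne_zero
  have hD0 : ENNReal.ofReal |b.det| ≠ 0 := by
    simpa [ENNReal.ofReal_eq_zero, not_le, abs_pos] using hbd
  have hg' : AEMeasurable g volume := hg.1.aemeasurable
  rw [eLpNorm_two, eLpNorm_two]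
  congr 1
  have hF : AEMeasurable (fun x => ENNReal.ofReal (‖g x - ug b g x‖ ^ 2)) volume :=
    ENNReal.measurable_ofReal.comp_aemeasurable
      (((hg'.sub (aemeasurable_ug hb hg')).norm).pow_const 2)
  rw [lintegral_decomp b hbd _ hF, restrict_Icc_eq_Fd]
  have hG2meas : AEMeasurable (fun x => ENNReal.ofReal (‖g x‖ ^ 2)) volume :=
    ENNReal.measurable_ofReal.comp_aemeasurable ((hg'.norm).pow_const 2)
  have hgfin : ∫⁻ x, ENNReal.ofReal (‖g x‖ ^ 2) ∂volume ≠ ⊤ := by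
    have h2 := hg.2
    rw [eLpNorm_two] at h2
    intro hcon
    rw [hcon, ENNReal.top_rpow_of_pos (by norm_num)] at h2
    exact (lt_irrefl _ h2)
  have hfin : ∀ᵐ ω ∂(volume.restrict (Fd d)), Te b g ω ≠ ⊤ := by
    have hdec := lintegral_decomp b hbd _ hG2meas
    have heq2 : ∫⁻ ω in Fd d, ENNReal.ofReal |b.det| * Te b g ω ∂volume
        = ∫⁻ x, ENNReal.ofReal (‖g x‖ ^ 2) ∂volume := by
      rw [hdec]
      exact lintegral_congr fun ω => (ENNReal.tsum_mul_left).symm ▸ rfl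
    have hlt : ∫⁻ ω in Fd d, ENNReal.ofReal |b.det| * Te b g ω ∂volume ≠ ⊤ := by
      rw [heq2]; exact hgfin
    have hae := ae_lt_top' (((aemeasurable_Te hbd hg').const_mul _).restrict) hlt
    filter_upwards [hae] with ω hω hcon
    rw [hcon, ENNReal.mul_top hD0] at hω
    exact (lt_irrefl _ hω)
  refine lintegral_congr_ae ?_
  filter_upwards [hfin, ae_restrict_mem (ZSpan.fundamentalDomain_measurableSet _)]
    with ω h1 h2
  have hkey := pointwise_key hb ω h2 h1
  rw [Real.norm_eq_abs, sq_abs]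
  exact hkey
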